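/- Let A be a supercommutative ring and let 0 → A → V → M → 0 be an extension of A-modules where M is free of rank 1 on an odd generator (rank 0|1). Then there is a unique structure of supercommutative A-algebra on V with unit the image of 1 ∈ A, such that the multiplication map V × V → V restricted to lifts of M lands in A, the induced A-module structure on M agrees with the given one, and s² = 0 for every odd element s of V. Locally (when the extension splits with odd splitting θ), this algebra is A[θ] with θ² = 0. -/
import Mathlib


/-- A supercommutative ring: a ring `A` with a `ℤ/2`-grading `A = ev ⊕ odd`
such that even elements are central, odd elements anticommute and square to zero. -/
class SuperGrading (A : Type*) [Ring A] where
  ev : AddSubgroup A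
  odd : AddSubgroup A
  one_mem_ev : (1 : A) ∈ ev
  decomp : ∀ a : A, ∃ a₀ ∈ ev, ∃ a₁ ∈ odd, a = a₀ + a₁
  decomp_unique : ∀ a₀ ∈ ev, ∀ a₁ ∈ odd, a₀ + a₁ = 0 → a₀ = 0 ∧ a₁ = 0
  mul_ev_ev : ∀ a ∈ ev, ∀ b ∈ ev, a * b ∈ ev
  mul_ev_odd : ∀ a ∈ ev, ∀ b ∈ odd, a * b ∈ odd
  mul_odd_ev : ∀ a ∈ odd, ∀ b ∈ ev, a * b ∈ odd
  mul_odd_odd : ∀ a ∈ odd, ∀ b ∈ odd, a * b ∈ ev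
  comm_ev_ev : ∀ a ∈ ev, ∀ b ∈ ev, a * b = b * a
  comm_ev_odd : ∀ a ∈ ev, ∀ b ∈ odd, a * b = b * a
  anticomm_odd : ∀ a ∈ odd, ∀ b ∈ odd, a * b = -(b * a)
  odd_sq : ∀ a ∈ odd, a * a = 0

open SuperGrading

/-- An odd derivation of a supercommutative ring, with square zero. -/
structure OddDer (A : Type*) [Ring A] [SuperGrading A] where
  v : A → A
  map_add : ∀ a b : A, v (a + b) = v a + v b
  map_ev : ∀ a ∈ ev (A := A), v a ∈ odd (A := A)
  map_odd : ∀ a ∈ odd (A := A), v a ∈ ev (A := A)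
  leib_ev : ∀ a ∈ ev (A := A), ∀ b : A, v (a * b) = v a * b + a * v b
  leib_odd : ∀ a ∈ odd (A := A), ∀ b : A, v (a * b) = v a * b - a * v b
  sq_zero : ∀ a : A, v (v a) = 0

/-- The conditions characterizing the supercommutative `A`-algebra structure on the
extension `V = A ⊕ A·θ` of the free rank-`0|1` module by `A` (an element `(a, b)`
stands for `a + bθ`): biadditivity, associativity, unit `1 = (1,0)`, compatibility
with the `A`-module structure, supercommutativity, and `s² = 0` for odd `s`. -/
def GoodMul {A : Type*} [Ring A] [SuperGrading A]
    (mul : A × A → A × A → A × A) : Prop :=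
  (∀ x y z : A × A, mul (x + y) z = mul x z + mul y z) ∧
  (∀ x y z : A × A, mul x (y + z) = mul x y + mul x z) ∧
  (∀ x y z : A × A, mul (mul x y) z = mul x (mul y z)) ∧
  (∀ x : A × A, mul (1, 0) x = x) ∧
  (∀ x : A × A, mul x (1, 0) = x) ∧
  (∀ a a' b' : A, mul (a, 0) (a', b') = (a * a', a * b')) ∧
  (∀ x y : A × A, (x.1 ∈ ev (A := A) ∧ x.2 ∈ odd (A := A)) → mul x y = mul y x) ∧
  (∀ x y : A × A, (x.1 ∈ odd (A := A) ∧ x.2 ∈ ev (A := A)) →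
      (y.1 ∈ odd (A := A) ∧ y.2 ∈ ev (A := A)) → mul x y = -(mul y x)) ∧
  (∀ x : A × A, (x.1 ∈ odd (A := A) ∧ x.2 ∈ ev (A := A)) → mul x x = 0)

namespace Stmt18Aux

variable {A : Type*} [Ring A] [SuperGrading A]

noncomputable def ep (a : A) : A := (decomp a).choose

lemma ep_mem (a : A) : ep a ∈ ev (A := A) := (decomp a).choose_spec.1

lemma op_mem (a : A) : a - ep a ∈ odd (A := A) := by
  obtain ⟨a1, h1, heq⟩ := (decomp a).choose_spec.2
  have h2 : a - ep a = a1 := sub_eq_iff_eq_add'.mpr heq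
  rw [h2]; exact h1

lemma ep_unique {a x y : A} (hx : x ∈ ev (A := A)) (hy : y ∈ odd (A := A))
    (h : a = x + y) : ep a = x := by
  have h0 : (ep a - x) + ((a - ep a) - y) = 0 := by
    have : a = ep a + (a - ep a) := by abel
    calc (ep a - x) + ((a - ep a) - y) = (ep a + (a - ep a)) - (x + y) := by abel
      _ = 0 := by rw [← this, ← h]; abel
  have h1 := (decomp_unique (ep a - x) (sub_mem (ep_mem a) hx)
    ((a - ep a) - y) (sub_mem (op_mem a) hy) h0).1
  have := sub_eq_zero.mp h1
  exact this

noncomputable def sigma (a : A) : A := ep a - (a - ep a)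

lemma sigma_ev {a : A} (ha : a ∈ ev (A := A)) : sigma a = a := by
  have h : ep a = a := ep_unique ha (zero_mem _) (add_zero a).symm
  unfold sigma; rw [h]; abel

lemma sigma_odd {a : A} (ha : a ∈ odd (A := A)) : sigma a = -a := by
  have h : ep a = 0 := ep_unique (zero_mem _) ha (zero_add a).symm
  unfold sigma; rw [h]; abel

lemma sigma_add (a b : A) : sigma (a + b) = sigma a + sigma b := by
  have h : ep (a + b) = ep a + ep b :=
    ep_unique (add_mem (ep_mem a) (ep_mem b)) (add_mem (op_mem a) (op_mem b)) (by abel)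
  unfold sigma; rw [h]; abel

lemma sigma_mul (a b : A) : sigma (a * b) = sigma a * sigma b := by
  have h : ep (a * b) = ep a * ep b + (a - ep a) * (b - ep b) :=
    ep_unique
      (add_mem (mul_ev_ev _ (ep_mem a) _ (ep_mem b))
        (mul_odd_odd _ (op_mem a) _ (op_mem b)))
      (add_mem (mul_ev_odd _ (ep_mem a) _ (op_mem b))
        (mul_odd_ev _ (op_mem a) _ (ep_mem b)))
      (by noncomm_ring)
  unfold sigma; rw [h]; noncomm_ring

lemma sigma_one : sigma (1 : A) = 1 := sigma_ev one_mem_ev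

lemma ev_central {a : A} (ha : a ∈ ev (A := A)) (b : A) : a * b = b * a := by
  have h : a * b = a * ep b + a * (b - ep b) := by noncomm_ring
  rw [h, comm_ev_ev _ ha _ (ep_mem b), comm_ev_odd _ ha _ (op_mem b)]
  noncomm_ring

lemma odd_sigma {b : A} (hb : b ∈ odd (A := A)) (a : A) : b * sigma a = a * b := by
  have h1 : ep a * b = b * ep a := comm_ev_odd _ (ep_mem a) _ hb
  have h2 : (a - ep a) * b = -(b * (a - ep a)) := anticomm_odd _ (op_mem a) _ hb
  have h3 : a * b = ep a * b + (a - ep a) * b := by noncomm_ring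
  unfold sigma
  rw [h3, h1, h2]; noncomm_ring

noncomputable def gm (x y : A × A) : A × A :=
  (x.1 * y.1, x.1 * y.2 + x.2 * sigma y.1)

lemma gm_good : GoodMul (gm (A := A)) := by
  refine ⟨?_, ?_, ?_, ?_, ?_, ?_, ?_, ?_, ?_⟩
  · intro x y z
    simp only [gm, Prod.fst_add, Prod.snd_add, Prod.mk_add_mk, Prod.mk.injEq]
    constructor <;> noncomm_ring
  · intro x y z
    simp only [gm, Prod.fst_add, Prod.snd_add, Prod.mk_add_mk, sigma_add, Prod.mk.injEq]
    constructor <;> noncomm_ring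
  · intro x y z
    simp only [gm, sigma_mul, sigma_add, Prod.mk.injEq]
    constructor <;> noncomm_ring
  · intro x; simp [gm]
  · intro x; simp [gm, sigma_one]
  · intro a a' b'; simp [gm]
  · rintro x y ⟨h1, h2⟩
    simp only [gm, Prod.mk.injEq]
    refine ⟨ev_central h1 y.1, ?_⟩
    rw [sigma_ev h1, odd_sigma h2 y.1, ev_central h1 y.2]; abel
  · rintro x y ⟨h1, h2⟩ ⟨h3, h4⟩
    simp only [gm, Prod.neg_mk, Prod.mk.injEq, sigma_odd h1, sigma_odd h3]
    refine ⟨anticomm_odd _ h1 _ h3, ?_⟩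
    have e1 : x.1 * y.2 = y.2 * x.1 := (ev_central h4 x.1).symm
    have e2 : x.2 * y.1 = y.1 * x.2 := ev_central h2 y.1
    rw [mul_neg, mul_neg, e1, e2]; abel
  · rintro x ⟨h1, h2⟩
    simp only [gm, sigma_odd h1, odd_sq _ h1, Prod.mk.injEq, mul_neg]
    rw [ev_central h2 x.1]
    exact Prod.ext rfl (by simp)

lemma gm_key {mul : A × A → A × A → A × A} (h : GoodMul mul) (x y : A × A) :
    mul x y = gm x y := by
  obtain ⟨hl, hr, hassoc, hul, hur, hmod, hcomm, hanti, hsq⟩ := h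
  have hz : ∀ w : A × A, mul w 0 = 0 := by
    intro w
    have := hr w 0 0
    simpa using this
  have hkey1 : ∀ a' : A, mul (0, 1) (a', 0) = (0, sigma a') := by
    intro a'
    have hsplit : ((ep a', 0) : A × A) + (a' - ep a', 0) = (a', 0) := by
      simp [Prod.ext_iff]
    have he : mul (0, 1) (ep a', 0) = (0, ep a') := by
      rw [← hcomm (ep a', 0) (0, 1) ⟨ep_mem a', zero_mem _⟩, hmod]
      simp
    have ho : mul (0, 1) (a' - ep a', 0) = (0, -(a' - ep a')) := by
      rw [hanti (0, 1) (a' - ep a', 0) ⟨zero_mem _, one_mem_ev⟩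
        ⟨op_mem a', zero_mem _⟩, hmod]
      simp [Prod.ext_iff]
    calc mul (0, 1) (a', 0) = mul (0, 1) ((ep a', 0) + (a' - ep a', 0)) := by rw [hsplit]
      _ = (0, ep a') + (0, -(a' - ep a')) := by rw [hr, he, ho]
      _ = (0, sigma a') := by
          simp only [Prod.mk_add_mk, Prod.mk.injEq, sigma]
          exact ⟨by abel, by abel⟩
  have hfac : ∀ b : A, ((0, b) : A × A) = mul (b, 0) (0, 1) := by
    intro b; rw [hmod]; simp
  have hkey2 : ∀ b' : A, mul (0, 1) (0, b') = 0 := by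
    intro b'
    rw [hfac b', ← hassoc, hkey1 b']
    rw [show ((0, sigma b') : A × A) = mul (sigma b', 0) (0, 1) from hfac _,
      hassoc, hsq (0, 1) ⟨zero_mem _, one_mem_ev⟩, hz]
  have main : ∀ a b a' b' : A,
      mul (a, b) (a', b') = (a * a', a * b' + b * sigma a') := by
    intro a b a' b'
    have h1 : mul (a, b) (a', b') = mul (a, 0) (a', b') + mul (0, b) (a', b') := by
      rw [show ((a, b) : A × A) = (a, 0) + (0, b) by simp, hl]
    have h2 : mul (0, b) (a', b') = (0, b * sigma a') := by
      rw [hfac b, hassoc]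
      have h3 : mul (0, 1) (a', b') = (0, sigma a') := by
        rw [show ((a', b') : A × A) = (a', 0) + (0, b') by simp, hr, hkey1, hkey2,
          add_zero]
      rw [h3, hmod]
      simp
    rw [h1, hmod, h2]
    simp [Prod.ext_iff]
  obtain ⟨a, b⟩ := x; obtain ⟨a', b'⟩ := y
  rw [main]; rfl

end Stmt18Aux

/-- on the extension `0 → A → V → ΠA → 0` with `ΠA` free of rank `0|1`
(realized as `V = A × A`, `(a,b) = a + bθ`), there is a unique supercommutative
`A`-algebra structure with unit `(1,0)` such that odd elements square to zero and the
induced module structures are the given ones; it is given by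
`(a + bθ)(a' + b'θ) = aa' + (ab' + (-1)^{|a'|} b a')θ`. -/
theorem stmt18 {A : Type*} [Ring A] [SuperGrading A] :
    (∃! mul : A × A → A × A → A × A, GoodMul mul) ∧
    (∀ mul : A × A → A × A → A × A, GoodMul mul →
      ∀ a b a' b' : A,
        (a' ∈ ev (A := A) → mul (a, b) (a', b') = (a * a', a * b' + b * a')) ∧
        (a' ∈ odd (A := A) → mul (a, b) (a', b') = (a * a', a * b' - b * a'))) := by
  open Stmt18Aux in
  constructor
  · exact ⟨gm, gm_good, fun m hm => funext fun x => funext fun y => gm_key hm x y⟩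
  · intro mul hm a b a' b'
    constructor
    · intro hev
      rw [gm_key hm, gm]
      simp [sigma_ev hev]
    · intro hodd
      rw [gm_key hm, gm]
      simp [sigma_odd hodd, sub_eq_add_neg]
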